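/- Let u be a classical solution of the forward problem with source δF, and let φ be a classical solution of the backward (adjoint-type) problem with boundary inputs p and q. Then the integral relationship of Lemma 4 holds: ∫₀^T p(t) ∂ₓu(0,t) dt + ∫₀^T q(t) ∂ₓu(ℓ,t) dt = ∫₀^T ∫₀^ℓ δF(x,t) φ(x,t) dx dt. -/

import Mathlib

open Set MeasureTheory

/-- A classical solution of the forward problem for the damped Euler–Bernoulli beam
equation `ρ_A(x) uₜₜ + μ(x) uₜ − (T_r(x) uₓ)ₓ + (r(x) uₓₓ + κ(x) uₓₓₜ)ₓₓ = F(x,t)` on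
`(0,ℓ) × (0,T)`, with homogeneous initial conditions and simply supported boundary
conditions.  The fields `ux, uxx, ut, utt, uxt, uxxt` are the partial derivatives of
`u`, `Ax` is the spatial derivative of `T_r(x) uₓ`, and `Bx, Bxx` are the first and
second spatial derivatives of the bending moment `B(x,t) = r(x) uₓₓ + κ(x) uₓₓₜ`. -/
structure ForwardSol (ℓ T : ℝ) (ρA μ Tr r κ : ℝ → ℝ) (F : ℝ → ℝ → ℝ) where
  u : ℝ → ℝ → ℝ
  ux : ℝ → ℝ → ℝ
  uxx : ℝ → ℝ → ℝ
  ut : ℝ → ℝ → ℝ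
  utt : ℝ → ℝ → ℝ
  uxt : ℝ → ℝ → ℝ
  uxxt : ℝ → ℝ → ℝ
  Ax : ℝ → ℝ → ℝ
  Bx : ℝ → ℝ → ℝ
  Bxx : ℝ → ℝ → ℝ
  smooth : ContDiffOn ℝ (⊤ : ℕ∞) (fun p : ℝ × ℝ => u p.1 p.2) (Icc 0 ℓ ×ˢ Icc 0 T)
  hux : ∀ x ∈ Icc (0:ℝ) ℓ, ∀ t ∈ Icc (0:ℝ) T, HasDerivAt (fun y => u y t) (ux x t) x
  huxx : ∀ x ∈ Icc (0:ℝ) ℓ, ∀ t ∈ Icc (0:ℝ) T, HasDerivAt (fun y => ux y t) (uxx x t) x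
  hut : ∀ x ∈ Icc (0:ℝ) ℓ, ∀ t ∈ Icc (0:ℝ) T, HasDerivAt (fun s => u x s) (ut x t) t
  hutt : ∀ x ∈ Icc (0:ℝ) ℓ, ∀ t ∈ Icc (0:ℝ) T, HasDerivAt (fun s => ut x s) (utt x t) t
  huxt : ∀ x ∈ Icc (0:ℝ) ℓ, ∀ t ∈ Icc (0:ℝ) T, HasDerivAt (fun s => ux x s) (uxt x t) t
  huxxt : ∀ x ∈ Icc (0:ℝ) ℓ, ∀ t ∈ Icc (0:ℝ) T, HasDerivAt (fun s => uxx x s) (uxxt x t) t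
  hAx : ∀ x ∈ Icc (0:ℝ) ℓ, ∀ t ∈ Icc (0:ℝ) T,
    HasDerivAt (fun y => Tr y * ux y t) (Ax x t) x
  hBx : ∀ x ∈ Icc (0:ℝ) ℓ, ∀ t ∈ Icc (0:ℝ) T,
    HasDerivAt (fun y => r y * uxx y t + κ y * uxxt y t) (Bx x t) x
  hBxx : ∀ x ∈ Icc (0:ℝ) ℓ, ∀ t ∈ Icc (0:ℝ) T, HasDerivAt (fun y => Bx y t) (Bxx x t) x
  cont_ux : ContinuousOn (fun p : ℝ × ℝ => ux p.1 p.2) (Icc 0 ℓ ×ˢ Icc 0 T)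
  cont_uxx : ContinuousOn (fun p : ℝ × ℝ => uxx p.1 p.2) (Icc 0 ℓ ×ˢ Icc 0 T)
  cont_ut : ContinuousOn (fun p : ℝ × ℝ => ut p.1 p.2) (Icc 0 ℓ ×ˢ Icc 0 T)
  cont_utt : ContinuousOn (fun p : ℝ × ℝ => utt p.1 p.2) (Icc 0 ℓ ×ˢ Icc 0 T)
  cont_uxt : ContinuousOn (fun p : ℝ × ℝ => uxt p.1 p.2) (Icc 0 ℓ ×ˢ Icc 0 T)
  cont_uxxt : ContinuousOn (fun p : ℝ × ℝ => uxxt p.1 p.2) (Icc 0 ℓ ×ˢ Icc 0 T)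
  cont_Ax : ContinuousOn (fun p : ℝ × ℝ => Ax p.1 p.2) (Icc 0 ℓ ×ˢ Icc 0 T)
  cont_Bx : ContinuousOn (fun p : ℝ × ℝ => Bx p.1 p.2) (Icc 0 ℓ ×ˢ Icc 0 T)
  cont_Bxx : ContinuousOn (fun p : ℝ × ℝ => Bxx p.1 p.2) (Icc 0 ℓ ×ˢ Icc 0 T)
  pde : ∀ x ∈ Ioo (0:ℝ) ℓ, ∀ t ∈ Ioo (0:ℝ) T,
    ρA x * utt x t + μ x * ut x t - Ax x t + Bxx x t = F x t
  init_u : ∀ x ∈ Ioo (0:ℝ) ℓ, u x 0 = 0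
  init_ut : ∀ x ∈ Ioo (0:ℝ) ℓ, ut x 0 = 0
  bc_u0 : ∀ t ∈ Icc (0:ℝ) T, u 0 t = 0
  bc_ul : ∀ t ∈ Icc (0:ℝ) T, u ℓ t = 0
  bc_m0 : ∀ t ∈ Icc (0:ℝ) T, r 0 * uxx 0 t + κ 0 * uxxt 0 t = 0
  bc_ml : ∀ t ∈ Icc (0:ℝ) T, r ℓ * uxx ℓ t + κ ℓ * uxxt ℓ t = 0

/-- A classical solution of the backward (adjoint-type) problem
`ρ_A(x) φₜₜ − μ(x) φₜ − (T_r(x) φₓ)ₓ + (r(x) φₓₓ − κ(x) φₓₓₜ)ₓₓ = 0` on `(0,ℓ) × (0,T)`,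
with homogeneous final conditions at `t = T`, Dirichlet boundary conditions
`φ(0,t) = φ(ℓ,t) = 0`, and moment boundary inputs
`−(r φₓₓ − κ φₓₓₜ)|ₓ₌₀ = p(t)`, `(r φₓₓ − κ φₓₓₜ)|ₓ₌ℓ = q(t)`.  The fields
`Dx` and `Cx, Cxx` are the spatial derivatives of `T_r(x) φₓ` and of
`C(x,t) = r(x) φₓₓ − κ(x) φₓₓₜ`, respectively. -/
structure BackwardSol (ℓ T : ℝ) (ρA μ Tr r κ : ℝ → ℝ) (p q : ℝ → ℝ) where
  φ : ℝ → ℝ → ℝ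
  φx : ℝ → ℝ → ℝ
  φxx : ℝ → ℝ → ℝ
  φt : ℝ → ℝ → ℝ
  φtt : ℝ → ℝ → ℝ
  φxxt : ℝ → ℝ → ℝ
  Dx : ℝ → ℝ → ℝ
  Cx : ℝ → ℝ → ℝ
  Cxx : ℝ → ℝ → ℝ
  smooth : ContDiffOn ℝ (⊤ : ℕ∞) (fun p : ℝ × ℝ => φ p.1 p.2) (Icc 0 ℓ ×ˢ Icc 0 T)
  hφx : ∀ x ∈ Icc (0:ℝ) ℓ, ∀ t ∈ Icc (0:ℝ) T, HasDerivAt (fun y => φ y t) (φx x t) x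
  hφxx : ∀ x ∈ Icc (0:ℝ) ℓ, ∀ t ∈ Icc (0:ℝ) T, HasDerivAt (fun y => φx y t) (φxx x t) x
  hφt : ∀ x ∈ Icc (0:ℝ) ℓ, ∀ t ∈ Icc (0:ℝ) T, HasDerivAt (fun s => φ x s) (φt x t) t
  hφtt : ∀ x ∈ Icc (0:ℝ) ℓ, ∀ t ∈ Icc (0:ℝ) T, HasDerivAt (fun s => φt x s) (φtt x t) t
  hφxxt : ∀ x ∈ Icc (0:ℝ) ℓ, ∀ t ∈ Icc (0:ℝ) T, HasDerivAt (fun s => φxx x s) (φxxt x t) t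
  hDx : ∀ x ∈ Icc (0:ℝ) ℓ, ∀ t ∈ Icc (0:ℝ) T,
    HasDerivAt (fun y => Tr y * φx y t) (Dx x t) x
  hCx : ∀ x ∈ Icc (0:ℝ) ℓ, ∀ t ∈ Icc (0:ℝ) T,
    HasDerivAt (fun y => r y * φxx y t - κ y * φxxt y t) (Cx x t) x
  hCxx : ∀ x ∈ Icc (0:ℝ) ℓ, ∀ t ∈ Icc (0:ℝ) T, HasDerivAt (fun y => Cx y t) (Cxx x t) x
  cont_φx : ContinuousOn (fun p : ℝ × ℝ => φx p.1 p.2) (Icc 0 ℓ ×ˢ Icc 0 T)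
  cont_φxx : ContinuousOn (fun p : ℝ × ℝ => φxx p.1 p.2) (Icc 0 ℓ ×ˢ Icc 0 T)
  cont_φt : ContinuousOn (fun p : ℝ × ℝ => φt p.1 p.2) (Icc 0 ℓ ×ˢ Icc 0 T)
  cont_φtt : ContinuousOn (fun p : ℝ × ℝ => φtt p.1 p.2) (Icc 0 ℓ ×ˢ Icc 0 T)
  cont_φxxt : ContinuousOn (fun p : ℝ × ℝ => φxxt p.1 p.2) (Icc 0 ℓ ×ˢ Icc 0 T)
  cont_Dx : ContinuousOn (fun p : ℝ × ℝ => Dx p.1 p.2) (Icc 0 ℓ ×ˢ Icc 0 T)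
  cont_Cx : ContinuousOn (fun p : ℝ × ℝ => Cx p.1 p.2) (Icc 0 ℓ ×ˢ Icc 0 T)
  cont_Cxx : ContinuousOn (fun p : ℝ × ℝ => Cxx p.1 p.2) (Icc 0 ℓ ×ˢ Icc 0 T)
  pde : ∀ x ∈ Ioo (0:ℝ) ℓ, ∀ t ∈ Ioo (0:ℝ) T,
    ρA x * φtt x t - μ x * φt x t - Dx x t + Cxx x t = 0
  final_φ : ∀ x ∈ Ioo (0:ℝ) ℓ, φ x T = 0
  final_φt : ∀ x ∈ Ioo (0:ℝ) ℓ, φt x T = 0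
  bc_φ0 : ∀ t ∈ Icc (0:ℝ) T, φ 0 t = 0
  bc_φl : ∀ t ∈ Icc (0:ℝ) T, φ ℓ t = 0
  bc_m0 : ∀ t ∈ Icc (0:ℝ) T, -(r 0 * φxx 0 t - κ 0 * φxxt 0 t) = p t
  bc_ml : ∀ t ∈ Icc (0:ℝ) T, r ℓ * φxx ℓ t - κ ℓ * φxxt ℓ t = q t

/-- **Integral relationship of Lemma 4.** If `u` is a classical solution of the forward
problem with source `δF` and `φ` is a classical solution of the backward problem with
boundary inputs `p, q`, then
`∫₀^T p(t) uₓ(0,t) dt + ∫₀^T q(t) uₓ(ℓ,t) dt = ∫₀^T ∫₀^ℓ δF(x,t) φ(x,t) dx dt`. -/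
theorem adjoint_integral_relationship
    (ℓ T ρ₀ r₀ κ₀ : ℝ) (hℓ : 0 < ℓ) (hT : 0 < T)
    (hρ₀ : 0 < ρ₀) (hr₀ : 0 < r₀) (hκ₀ : 0 < κ₀)
    (ρA μ Tr r κ : ℝ → ℝ) (δF : ℝ → ℝ → ℝ) (p q : ℝ → ℝ)
    (hρA : ContDiffOn ℝ (⊤ : ℕ∞) ρA (Icc 0 ℓ))
    (hμ : ContDiffOn ℝ (⊤ : ℕ∞) μ (Icc 0 ℓ))
    (hTr : ContDiffOn ℝ (⊤ : ℕ∞) Tr (Icc 0 ℓ))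
    (hr : ContDiffOn ℝ (⊤ : ℕ∞) r (Icc 0 ℓ))
    (hκ : ContDiffOn ℝ (⊤ : ℕ∞) κ (Icc 0 ℓ))
    (hρAb : ∀ x ∈ Icc (0:ℝ) ℓ, ρ₀ ≤ ρA x)
    (hμb : ∀ x ∈ Icc (0:ℝ) ℓ, 0 ≤ μ x)
    (hTrb : ∀ x ∈ Icc (0:ℝ) ℓ, 0 ≤ Tr x)
    (hrb : ∀ x ∈ Icc (0:ℝ) ℓ, r₀ ≤ r x)
    (hκb : ∀ x ∈ Icc (0:ℝ) ℓ, κ₀ ≤ κ x)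
    (hδF : ContinuousOn (fun pt : ℝ × ℝ => δF pt.1 pt.2) (Icc 0 ℓ ×ˢ Icc 0 T))
    (hp : ContinuousOn p (Icc (0:ℝ) T))
    (hq : ContinuousOn q (Icc (0:ℝ) T))
    (sol : ForwardSol ℓ T ρA μ Tr r κ δF)
    (adj : BackwardSol ℓ T ρA μ Tr r κ p q) :
    (∫ t in (0:ℝ)..T, p t * sol.ux 0 t) + (∫ t in (0:ℝ)..T, q t * sol.ux ℓ t)
      = ∫ t in (0:ℝ)..T, ∫ x in (0:ℝ)..ℓ, δF x t * adj.φ x t := by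
  obtain ⟨u, ux, uxx, ut, utt, uxt, uxxt, Ax, Bx, Bxx, usmooth, hux, huxx, hut, hutt,
    huxt, huxxt, hAx, hBx, hBxx, cux, cuxx, cut, cutt, cuxt, cuxxt, cAx, cBx, cBxx,
    upde, iu, iut, bu0, bul, bm0u, bmlu⟩ := sol
  obtain ⟨φ, φx, φxx, φt, φtt, φxxt, Dx, Cx, Cxx, φsmooth, hφx, hφxx, hφt, hφtt, hφxxt,
    hDx, hCx, hCxx, cφx, cφxx, cφt, cφtt, cφxxt, cDx, cCx, cCxx, φpde, fφ, fφt,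
    bφ0, bφl, bm0φ, bmlφ⟩ := adj
  have cu : ContinuousOn (fun pt : ℝ × ℝ => u pt.1 pt.2) (Icc 0 ℓ ×ˢ Icc 0 T) :=
    usmooth.continuousOn
  have cφ : ContinuousOn (fun pt : ℝ × ℝ => φ pt.1 pt.2) (Icc 0 ℓ ×ˢ Icc 0 T) :=
    φsmooth.continuousOn
  -- coefficient functions, viewed on the rectangle
  have cρA' : ContinuousOn (fun pt : ℝ × ℝ => ρA pt.1) (Icc 0 ℓ ×ˢ Icc 0 T) :=
    hρA.continuousOn.comp continuousOn_fst (fun pt hpt => hpt.1)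
  have cμ' : ContinuousOn (fun pt : ℝ × ℝ => μ pt.1) (Icc 0 ℓ ×ˢ Icc 0 T) :=
    hμ.continuousOn.comp continuousOn_fst (fun pt hpt => hpt.1)
  have cr' : ContinuousOn (fun pt : ℝ × ℝ => r pt.1) (Icc 0 ℓ ×ˢ Icc 0 T) :=
    hr.continuousOn.comp continuousOn_fst (fun pt hpt => hpt.1)
  have cκ' : ContinuousOn (fun pt : ℝ × ℝ => κ pt.1) (Icc 0 ℓ ×ˢ Icc 0 T) :=
    hκ.continuousOn.comp continuousOn_fst (fun pt hpt => hpt.1)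
  -- the time-flux and space-flux functions
  set P : ℝ → ℝ → ℝ := fun x t => ρA x * (ut x t * φ x t - u x t * φt x t)
      + μ x * (u x t * φ x t) + κ x * (uxx x t * φxx x t) with hPdef
  set Pt : ℝ → ℝ → ℝ := fun x t => ρA x * (utt x t * φ x t - u x t * φtt x t)
      + μ x * (ut x t * φ x t + u x t * φt x t)
      + κ x * (uxxt x t * φxx x t + uxx x t * φxxt x t) with hPtdef
  set Q : ℝ → ℝ → ℝ := fun x t => -(Tr x * ux x t * φ x t) + Tr x * φx x t * u x t
      + Bx x t * φ x t - Cx x t * u x t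
      - (r x * uxx x t + κ x * uxxt x t) * φx x t
      + (r x * φxx x t - κ x * φxxt x t) * ux x t with hQdef
  set Qx : ℝ → ℝ → ℝ := fun x t => -(Ax x t * φ x t) + Dx x t * u x t
      + Bxx x t * φ x t - Cxx x t * u x t
      - (r x * uxx x t + κ x * uxxt x t) * φxx x t
      + (r x * φxx x t - κ x * φxxt x t) * uxx x t with hQxdef
  have contPt : ContinuousOn (fun pt : ℝ × ℝ => Pt pt.1 pt.2) (Icc 0 ℓ ×ˢ Icc 0 T) := by
    simp only [hPtdef]
    exact ((cρA'.mul ((cutt.mul cφ).sub (cu.mul cφtt))).add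
      (cμ'.mul ((cut.mul cφ).add (cu.mul cφt)))).add
      (cκ'.mul ((cuxxt.mul cφxx).add (cuxx.mul cφxxt)))
  have contQx : ContinuousOn (fun pt : ℝ × ℝ => Qx pt.1 pt.2) (Icc 0 ℓ ×ˢ Icc 0 T) := by
    simp only [hQxdef]
    exact (((((cAx.mul cφ).neg.add (cDx.mul cu)).add (cBxx.mul cφ)).sub
      (cCxx.mul cu)).sub (((cr'.mul cuxx).add (cκ'.mul cuxxt)).mul cφxx)).add
      (((cr'.mul cφxx).sub (cκ'.mul cφxxt)).mul cuxx)
  have cTr' : ContinuousOn (fun pt : ℝ × ℝ => Tr pt.1) (Icc 0 ℓ ×ˢ Icc 0 T) :=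
    hTr.continuousOn.comp continuousOn_fst (fun pt hpt => hpt.1)
  have contQ : ContinuousOn (fun pt : ℝ × ℝ => Q pt.1 pt.2) (Icc 0 ℓ ×ˢ Icc 0 T) := by
    simp only [hQdef]
    exact ((((((cTr'.mul cux).mul cφ).neg.add ((cTr'.mul cφx).mul cu)).add
      (cBx.mul cφ)).sub (cCx.mul cu)).sub
      (((cr'.mul cuxx).add (cκ'.mul cuxxt)).mul cφx)).add
      (((cr'.mul cφxx).sub (cκ'.mul cφxxt)).mul cux)
  -- slices
  have sliceX : ∀ {f : ℝ → ℝ → ℝ}, ContinuousOn (fun pt : ℝ × ℝ => f pt.1 pt.2)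
      (Icc 0 ℓ ×ˢ Icc 0 T) → ∀ {t : ℝ}, t ∈ Icc (0:ℝ) T →
      ContinuousOn (fun x => f x t) (Icc 0 ℓ) := by
    intro f hf t ht
    exact hf.comp (Continuous.continuousOn (by fun_prop) :
      ContinuousOn (fun x : ℝ => ((x, t) : ℝ × ℝ)) (Icc 0 ℓ)) (fun x hx => ⟨hx, ht⟩)
  have sliceT : ∀ {f : ℝ → ℝ → ℝ}, ContinuousOn (fun pt : ℝ × ℝ => f pt.1 pt.2)
      (Icc 0 ℓ ×ˢ Icc 0 T) → ∀ {x : ℝ}, x ∈ Icc (0:ℝ) ℓ →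
      ContinuousOn (fun t => f x t) (Icc 0 T) := by
    intro f hf x hx
    exact hf.comp (Continuous.continuousOn (by fun_prop) :
      ContinuousOn (fun t : ℝ => ((x, t) : ℝ × ℝ)) (Icc 0 T)) (fun t ht => ⟨hx, ht⟩)
  have hTmem : ∀ t ∈ Icc (0:ℝ) T, t ∈ Icc (0:ℝ) T := fun t ht => ht
  have h0T : (0:ℝ) ∈ Icc (0:ℝ) T := ⟨le_refl 0, hT.le⟩
  have hTT : T ∈ Icc (0:ℝ) T := ⟨hT.le, le_refl T⟩
  have h0l : (0:ℝ) ∈ Icc (0:ℝ) ℓ := ⟨le_refl 0, hℓ.le⟩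
  have hll : ℓ ∈ Icc (0:ℝ) ℓ := ⟨hℓ.le, le_refl ℓ⟩
  -- FTC in x
  have hFTCx : ∀ t ∈ Icc (0:ℝ) T, (∫ x in (0:ℝ)..ℓ, Qx x t) = Q ℓ t - Q 0 t := by
    intro t ht
    apply intervalIntegral.integral_eq_sub_of_hasDerivAt
    · intro x hx
      rw [uIcc_of_le hℓ.le] at hx
      have H := (((((((hAx x hx t ht).mul (hφx x hx t ht)).neg.add
        ((hDx x hx t ht).mul (hux x hx t ht))).add
        ((hBxx x hx t ht).mul (hφx x hx t ht))).sub
        ((hCxx x hx t ht).mul (hux x hx t ht))).sub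
        ((hBx x hx t ht).mul (hφxx x hx t ht))).add
        ((hCx x hx t ht).mul (huxx x hx t ht)))
      simp only [hQdef]
      convert H using 1
      · rfl
      simp only [hQxdef]
      ring
    · exact (sliceX contQx ht).intervalIntegrable_of_Icc hℓ.le
  -- FTC in t
  have hFTCt : ∀ x ∈ Icc (0:ℝ) ℓ, (∫ t in (0:ℝ)..T, Pt x t) = P x T - P x 0 := by
    intro x hx
    apply intervalIntegral.integral_eq_sub_of_hasDerivAt
    · intro t ht
      rw [uIcc_of_le hT.le] at ht
      have H := ((HasDerivAt.const_mul (ρA x)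
          (((hutt x hx t ht).mul (hφt x hx t ht)).sub
            ((hut x hx t ht).mul (hφtt x hx t ht)))).add
        (HasDerivAt.const_mul (μ x)
          ((hut x hx t ht).mul (hφt x hx t ht)))).add
        (HasDerivAt.const_mul (κ x)
          ((huxxt x hx t ht).mul (hφxxt x hx t ht)))
      simp only [hPdef]
      convert H using 1
      · rfl
      simp only [hPtdef]
      ring
    · exact (sliceT contPt hx).intervalIntegrable_of_Icc hT.le
  -- vanishing of the time-flux at t = 0 and t = T
  have hux0 : ∀ x ∈ Ioo (0:ℝ) ℓ, ux x 0 = 0 := by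
    intro x hx
    have hev : (fun y => u y 0) =ᶠ[nhds x] fun _ => (0:ℝ) :=
      Filter.eventually_of_mem (Ioo_mem_nhds hx.1 hx.2) (fun y hy => iu y hy)
    exact (hux x (Ioo_subset_Icc_self hx) 0 h0T).unique
      ((hasDerivAt_const x (0:ℝ)).congr_of_eventuallyEq hev)
  have huxx0 : ∀ x ∈ Ioo (0:ℝ) ℓ, uxx x 0 = 0 := by
    intro x hx
    have hev : (fun y => ux y 0) =ᶠ[nhds x] fun _ => (0:ℝ) :=
      Filter.eventually_of_mem (Ioo_mem_nhds hx.1 hx.2) (fun y hy => hux0 y hy)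
    exact (huxx x (Ioo_subset_Icc_self hx) 0 h0T).unique
      ((hasDerivAt_const x (0:ℝ)).congr_of_eventuallyEq hev)
  have hφxT : ∀ x ∈ Ioo (0:ℝ) ℓ, φx x T = 0 := by
    intro x hx
    have hev : (fun y => φ y T) =ᶠ[nhds x] fun _ => (0:ℝ) :=
      Filter.eventually_of_mem (Ioo_mem_nhds hx.1 hx.2) (fun y hy => fφ y hy)
    exact (hφx x (Ioo_subset_Icc_self hx) T hTT).unique
      ((hasDerivAt_const x (0:ℝ)).congr_of_eventuallyEq hev)
  have hφxxT : ∀ x ∈ Ioo (0:ℝ) ℓ, φxx x T = 0 := by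
    intro x hx
    have hev : (fun y => φx y T) =ᶠ[nhds x] fun _ => (0:ℝ) :=
      Filter.eventually_of_mem (Ioo_mem_nhds hx.1 hx.2) (fun y hy => hφxT y hy)
    exact (hφxx x (Ioo_subset_Icc_self hx) T hTT).unique
      ((hasDerivAt_const x (0:ℝ)).congr_of_eventuallyEq hev)
  have hPzero : ∀ x ∈ Ioo (0:ℝ) ℓ, P x T - P x 0 = 0 := by
    intro x hx
    simp only [hPdef]
    rw [iu x hx, iut x hx, huxx0 x hx, fφ x hx, fφt x hx, hφxxT x hx]
    ring
  -- boundary values of the space-flux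
  have hQ0 : ∀ t ∈ Icc (0:ℝ) T, Q 0 t = -(p t * ux 0 t) := by
    intro t ht
    simp only [hQdef]
    rw [bφ0 t ht, bu0 t ht]
    have h1 := bm0u t ht
    have h2 := bm0φ t ht
    linear_combination (-(φx 0 t)) * h1 - (ux 0 t) * h2
  have hQl : ∀ t ∈ Icc (0:ℝ) T, Q ℓ t = q t * ux ℓ t := by
    intro t ht
    simp only [hQdef]
    rw [bφl t ht, bul t ht]
    have h1 := bmlu t ht
    have h2 := bmlφ t ht
    linear_combination (-(φx ℓ t)) * h1 + (ux ℓ t) * h2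
  -- pointwise key identity
  have hkey : ∀ x ∈ Ioo (0:ℝ) ℓ, ∀ t ∈ Ioo (0:ℝ) T,
      δF x t * φ x t = Pt x t + Qx x t := by
    intro x hx t ht
    have h1 := upde x hx t ht
    have h2 := φpde x hx t ht
    simp only [hPtdef, hQxdef]
    linear_combination (u x t) * h2 - (φ x t) * h1
  -- a.e. facts
  have aeNel : ∀ᵐ x : ℝ, x ≠ ℓ := by
    have : volume ({ℓ} : Set ℝ) = 0 := Real.volume_singleton
    exact (MeasureTheory.measure_eq_zero_iff_ae_notMem.mp this).mono
      (fun x h => by simpa using h)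
  have aeNeT : ∀ᵐ t : ℝ, t ≠ T := by
    have : volume ({T} : Set ℝ) = 0 := Real.volume_singleton
    exact (MeasureTheory.measure_eq_zero_iff_ae_notMem.mp this).mono
      (fun x h => by simpa using h)
  -- inner integral identity, for t in the open interval
  have hinner : ∀ t ∈ Ioo (0:ℝ) T,
      (∫ x in (0:ℝ)..ℓ, δF x t * φ x t)
        = (∫ x in (0:ℝ)..ℓ, Pt x t) + (Q ℓ t - Q 0 t) := by
    intro t ht
    have ht' : t ∈ Icc (0:ℝ) T := Ioo_subset_Icc_self ht
    have hcongr : (∫ x in (0:ℝ)..ℓ, δF x t * φ x t)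
        = ∫ x in (0:ℝ)..ℓ, (Pt x t + Qx x t) := by
      apply intervalIntegral.integral_congr_ae
      filter_upwards [aeNel] with x hxne hxmem
      rw [Set.uIoc_of_le hℓ.le] at hxmem
      exact hkey x ⟨hxmem.1, lt_of_le_of_ne hxmem.2 hxne⟩ t ht
    rw [hcongr, intervalIntegral.integral_add
      ((sliceX contPt ht').intervalIntegrable_of_Icc hℓ.le)
      ((sliceX contQx ht').intervalIntegrable_of_Icc hℓ.le),
      hFTCx t ht']
  -- integrability of Pt on the product
  have hPtint : MeasureTheory.Integrable (fun pt : ℝ × ℝ => Pt pt.2 pt.1)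
      ((volume.restrict (Ioc (0:ℝ) T)).prod (volume.restrict (Ioc (0:ℝ) ℓ))) := by
    rw [MeasureTheory.Measure.prod_restrict, ← MeasureTheory.Measure.volume_eq_prod]
    have cswap : ContinuousOn (fun pt : ℝ × ℝ => Pt pt.2 pt.1)
        (Icc 0 T ×ˢ Icc 0 ℓ) := by
      apply contPt.comp (continuous_swap.continuousOn)
      intro pt hpt
      exact ⟨hpt.2, hpt.1⟩
    have := cswap.integrableOn_compact (μ := volume) (isCompact_Icc.prod isCompact_Icc)
    exact this.mono_set (Set.prod_mono Ioc_subset_Icc_self Ioc_subset_Icc_self)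
  -- the time-flux integral vanishes
  have hgzero : (∫ t in (0:ℝ)..T, ∫ x in (0:ℝ)..ℓ, Pt x t) = 0 := by
    have swap := MeasureTheory.integral_integral_swap
      (f := fun t x => Pt x t)
      (μ := volume.restrict (Ioc (0:ℝ) T)) (ν := volume.restrict (Ioc (0:ℝ) ℓ)) hPtint
    have e1 : (∫ t in (0:ℝ)..T, ∫ x in (0:ℝ)..ℓ, Pt x t)
        = ∫ t in Ioc (0:ℝ) T, (∫ x in Ioc (0:ℝ) ℓ, Pt x t) := by
      rw [intervalIntegral.integral_of_le hT.le]
      apply MeasureTheory.setIntegral_congr_fun measurableSet_Ioc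
      intro t _
      simp only [intervalIntegral.integral_of_le hℓ.le]
    have e2 : (∫ x in Ioc (0:ℝ) ℓ, (∫ t in Ioc (0:ℝ) T, Pt x t)) = 0 := by
      have : ∀ᵐ x : ℝ, x ∈ Ioc (0:ℝ) ℓ → (∫ t in Ioc (0:ℝ) T, Pt x t) = 0 := by
        filter_upwards [aeNel] with x hxne hxmem
        have hxIoo : x ∈ Ioo (0:ℝ) ℓ := ⟨hxmem.1, lt_of_le_of_ne hxmem.2 hxne⟩
        have := hFTCt x (Ioo_subset_Icc_self hxIoo)
        rw [intervalIntegral.integral_of_le hT.le] at this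
        rw [this]
        exact hPzero x hxIoo
      calc (∫ x in Ioc (0:ℝ) ℓ, (∫ t in Ioc (0:ℝ) T, Pt x t))
          = ∫ x in Ioc (0:ℝ) ℓ, (0:ℝ) := by
            apply MeasureTheory.setIntegral_congr_ae measurableSet_Ioc
            filter_upwards [this] with x hx hx2
            exact hx hx2
        _ = 0 := by simp
    rw [e1, swap, e2]
  -- the boundary integral
  have hbdy : (∫ t in (0:ℝ)..T, (Q ℓ t - Q 0 t))
      = (∫ t in (0:ℝ)..T, q t * ux ℓ t) + (∫ t in (0:ℝ)..T, p t * ux 0 t) := by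
    have hcg : (∫ t in (0:ℝ)..T, (Q ℓ t - Q 0 t))
        = ∫ t in (0:ℝ)..T, (q t * ux ℓ t + p t * ux 0 t) := by
      apply intervalIntegral.integral_congr
      intro t ht
      rw [uIcc_of_le hT.le] at ht
      simp only [hQl t ht, hQ0 t ht]
      ring
    rw [hcg]
    exact intervalIntegral.integral_add
      ((hq.mul (sliceT cux hll)).intervalIntegrable_of_Icc hT.le)
      ((hp.mul (sliceT cux h0l)).intervalIntegrable_of_Icc hT.le)
  -- assembly
  have hmain : (∫ t in (0:ℝ)..T, ∫ x in (0:ℝ)..ℓ, δF x t * φ x t)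
      = (∫ t in (0:ℝ)..T, ∫ x in (0:ℝ)..ℓ, Pt x t)
        + (∫ t in (0:ℝ)..T, (Q ℓ t - Q 0 t)) := by
    have hcongr : (∫ t in (0:ℝ)..T, ∫ x in (0:ℝ)..ℓ, δF x t * φ x t)
        = ∫ t in (0:ℝ)..T, ((∫ x in (0:ℝ)..ℓ, Pt x t) + (Q ℓ t - Q 0 t)) := by
      apply intervalIntegral.integral_congr_ae
      filter_upwards [aeNeT] with t htne htmem
      rw [Set.uIoc_of_le hT.le] at htmem
      exact hinner t ⟨htmem.1, lt_of_le_of_ne htmem.2 htne⟩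
    rw [hcongr]
    apply intervalIntegral.integral_add
    · rw [intervalIntegrable_iff_integrableOn_Ioc_of_le hT.le]
      exact hPtint.integral_prod_left.congr (Filter.EventuallyEq.of_eq (by
        funext t
        rw [intervalIntegral.integral_of_le hℓ.le]))
    · exact ((sliceT contQ hll).sub (sliceT contQ h0l)).intervalIntegrable_of_Icc hT.le
  rw [hmain, hgzero, hbdy]
  ring
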